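/- Let (a_n)_{n∈ℕ} ⊂ ℂ and r > 0, and suppose that for every s ∈ ℂ with |s| > r the series Σ_{n=0}^∞ a_n · n! / s^{n+1} converges. Then: (1) for every t ∈ ℝ the series u(t) = Σ_{n=0}^∞ a_n t^n converges absolutely (so u is an entire function restricted to ℝ); (2) for every s ∈ ℂ with Re s > r, the function t ↦ e^{−st} u(t) is absolutely integrable on (0,∞) and ∫₀^∞ e^{−st} u(t) dt = Σ_{n=0}^∞ a_n · n! / s^{n+1}. -/

import Mathlib

open MeasureTheory

open Set Filter in
private lemma laplace_norm' (s : ℂ) (t : ℝ) (n : ℕ) :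
    ‖Complex.exp (-s * t) * (t:ℂ)^n‖ = Real.exp (-s.re * t) * |t|^n := by
  rw [norm_mul, norm_pow, Complex.norm_exp,
    Complex.norm_real, Real.norm_eq_abs]
  congr 1
  simp

open Set Filter in
private lemma laplace_integrable' {s : ℂ} (hs : 0 < s.re) (n : ℕ) :
    IntegrableOn (fun t : ℝ => Complex.exp (-s * t) * (t:ℂ)^n) (Set.Ioi 0) := by
  have hg : IntegrableOn (fun t : ℝ => t ^ (n:ℝ) * Real.exp (-s.re * t ^ (1:ℝ))) (Set.Ioi 0) :=
    integrableOn_rpow_mul_exp_neg_mul_rpow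
      (by exact_mod_cast neg_one_lt_zero.trans_le n.cast_nonneg) zero_lt_one hs
  apply Integrable.mono' hg
  · exact Continuous.aestronglyMeasurable (by continuity)
  · filter_upwards [ae_restrict_mem measurableSet_Ioi] with t ht
    rw [laplace_norm', abs_of_pos ht]
    rw [Real.rpow_one, Real.rpow_natCast, mul_comm]

open Set Filter in
private lemma laplace_tendsto_zero' {s : ℂ} (hs : 0 < s.re) (n : ℕ) :
    Tendsto (fun t : ℝ => (t:ℂ)^n * Complex.exp (-s * t)) atTop (nhds 0) := by
  rw [tendsto_zero_iff_norm_tendsto_zero]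
  have h1 : Tendsto (fun t : ℝ => (s.re)⁻¹^n * ((s.re * t)^n * Real.exp (-(s.re * t))))
      atTop (nhds ((s.re)⁻¹^n * 0)) :=
    ((Real.tendsto_pow_mul_exp_neg_atTop_nhds_zero n).comp
      (tendsto_id.const_mul_atTop hs)).const_mul _
  rw [mul_zero] at h1
  apply h1.congr'
  filter_upwards [eventually_gt_atTop 0] with t ht
  rw [norm_mul, norm_pow, Complex.norm_exp,
    Complex.norm_real, Real.norm_eq_abs, abs_of_pos ht]
  have h2 : (-s*(t:ℂ)).re = -(s.re*t) := by simp
  rw [h2, mul_pow, ← mul_assoc, ← mul_assoc, ← mul_pow, inv_mul_cancel₀ hs.ne', one_pow,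
    one_mul]

open Set Filter in
private lemma laplace_exp_hasDerivAt (s : ℂ) (t : ℝ) :
    HasDerivAt (fun t : ℝ => Complex.exp (-s * t)) (-s * Complex.exp (-s * t)) t := by
  have h1 : HasDerivAt (fun t : ℝ => -s * (t:ℂ)) (-s) t := by
    simpa using ((hasDerivAt_id t).ofReal_comp.const_mul (-s))
  simpa [mul_comm] using h1.cexp

open Set Filter in
private lemma laplace_value' {s : ℂ} (hs : 0 < s.re) :
    ∀ n : ℕ, ∫ t in Set.Ioi (0:ℝ), Complex.exp (-s * t) * (t:ℂ)^n
      = (Nat.factorial n : ℂ) / s ^ (n + 1) := by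
  have hs0 : s ≠ 0 := fun h => by simp [h] at hs
  intro n
  induction n with
  | zero =>
    have hderiv : ∀ t ∈ Ici (0:ℝ),
        HasDerivAt (fun t : ℝ => -s⁻¹ * Complex.exp (-s * t))
          (Complex.exp (-s * t) * (t:ℂ)^0) t := by
      intro t _
      have := (laplace_exp_hasDerivAt s t).const_mul (-s⁻¹)
      refine this.congr_deriv ?_
      field_simp
    have hint : IntegrableOn (fun t : ℝ => Complex.exp (-s * t) * (t:ℂ)^0) (Ioi 0) :=
      laplace_integrable' hs 0
    have htend : Tendsto (fun t : ℝ => -s⁻¹ * Complex.exp (-s * t)) atTop (nhds 0) := by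
      have := (laplace_tendsto_zero' hs 0).const_mul (-s⁻¹)
      simpa using this
    have := integral_Ioi_of_hasDerivAt_of_tendsto' hderiv hint htend
    rw [this]
    simp
  | succ n ih =>
    set c : ℂ := (n + 1 : ℂ) / s with hc
    have hderiv : ∀ t ∈ Ici (0:ℝ),
        HasDerivAt (fun t : ℝ => -s⁻¹ * ((t:ℂ)^(n+1) * Complex.exp (-s * t)))
          (Complex.exp (-s * t) * (t:ℂ)^(n+1) - c * (Complex.exp (-s * t) * (t:ℂ)^n)) t := by
      intro t _
      have hpow : HasDerivAt (fun t : ℝ => (t:ℂ)^(n+1)) ((n+1 : ℂ) * (t:ℂ)^n) t := by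
        have := (hasDerivAt_pow (n+1) t).ofReal_comp
        convert this using 1 <;> push_cast <;> ring
      have := ((hpow.mul (laplace_exp_hasDerivAt s t)).const_mul (-s⁻¹))
      refine this.congr_deriv ?_
      rw [hc]
      field_simp
      ring
    have hint : IntegrableOn
        (fun t : ℝ => Complex.exp (-s * t) * (t:ℂ)^(n+1)
          - c * (Complex.exp (-s * t) * (t:ℂ)^n)) (Ioi 0) :=
      (laplace_integrable' hs (n+1)).sub ((laplace_integrable' hs n).const_mul c)
    have htend : Tendsto (fun t : ℝ => -s⁻¹ * ((t:ℂ)^(n+1) * Complex.exp (-s * t)))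
        atTop (nhds 0) := by
      have := (laplace_tendsto_zero' hs (n+1)).const_mul (-s⁻¹)
      simpa using this
    have key := integral_Ioi_of_hasDerivAt_of_tendsto' hderiv hint htend
    simp only [Complex.ofReal_zero, zero_pow (Nat.succ_ne_zero n), zero_mul, mul_zero,
      neg_zero, sub_zero] at key
    rw [integral_sub (laplace_integrable' hs (n+1)) ((laplace_integrable' hs n).const_mul c),
      MeasureTheory.integral_const_mul, ih] at key
    have h2 : ∫ t in Set.Ioi (0:ℝ), Complex.exp (-s * t) * (t:ℂ)^(n+1)
        = c * ((Nat.factorial n : ℂ) / s ^ (n + 1)) := sub_eq_zero.mp key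
    rw [h2, hc, Nat.factorial_succ, div_mul_div_comm, ← pow_succ']
    push_cast
    ring

private lemma laplace_norm2 (s : ℂ) (c : ℂ) (t : ℝ) (n : ℕ) :
    ‖Complex.exp (-s * t) * (c * (t:ℂ)^n)‖
      = Real.exp (-s.re * t) * (‖c‖ * |t|^n) := by
  rw [norm_mul, norm_mul, norm_pow, Complex.norm_exp,
    Complex.norm_real, Real.norm_eq_abs]
  congr 2
  simp

private lemma laplace_exp_tsum (x : ℝ) :
    ∑' n : ℕ, x ^ n / (Nat.factorial n : ℝ) = Real.exp x := by
  rw [Real.exp_eq_exp_ℝ, NormedSpace.exp_eq_tsum_div]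

/-- Let (a_n) ⊂ ℂ and r > 0 be such that for every s with
|s| > r the series Σ_n a_n·n!/s^{n+1} converges. Then (1) for every t the series
u(t) = Σ_n a_n t^n converges absolutely; (2) for every s with Re s > r, the
function t ↦ e^{−st} u(t) is absolutely integrable on (0,∞) and its Laplace
transform equals the sum of the series Σ_n a_n·n!/s^{n+1}. -/
theorem laplace_transform_of_power_series
    (a : ℕ → ℂ) (r : ℝ) (hr : 0 < r)
    (hconv : ∀ s : ℂ, r < ‖s‖ →
      ∃ L : ℂ, Filter.Tendsto
        (fun N : ℕ => ∑ n ∈ Finset.range N,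
          a n * (Nat.factorial n : ℂ) / s ^ (n + 1))
        Filter.atTop (nhds L)) :
    (∀ t : ℝ, Summable (fun n : ℕ => ‖a n * (t : ℂ) ^ n‖)) ∧
    (∀ s : ℂ, r < s.re →
      IntegrableOn
        (fun t : ℝ => Complex.exp (-s * t) * ∑' n : ℕ, a n * (t : ℂ) ^ n)
        (Set.Ioi 0) ∧
      Filter.Tendsto
        (fun N : ℕ => ∑ n ∈ Finset.range N,
          a n * (Nat.factorial n : ℂ) / s ^ (n + 1))
        Filter.atTop
        (nhds (∫ t in Set.Ioi (0 : ℝ),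
          Complex.exp (-s * t) * ∑' n : ℕ, a n * (t : ℂ) ^ n))) := by
  classical
  -- Step 1: a growth bound on the coefficients, for every ρ > r.
  have keybound : ∀ ρ : ℝ, r < ρ → ∃ C : ℝ, 0 ≤ C ∧
      ∀ n : ℕ, ‖a n‖ * (Nat.factorial n : ℝ) ≤ C * ρ ^ (n+1) := by
    intro ρ hρ
    have hρ0 : 0 < ρ := hr.trans hρ
    obtain ⟨L, hL⟩ := hconv (ρ : ℂ) (by rwa [Complex.norm_real, Real.norm_eq_abs, abs_of_pos hρ0])
    have hterm : Filter.Tendsto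
        (fun n : ℕ => a n * (Nat.factorial n : ℂ) / (ρ:ℂ) ^ (n+1))
        Filter.atTop (nhds 0) := by
      have h1 := (hL.comp (Filter.tendsto_add_atTop_nat 1)).sub hL
      rw [sub_self] at h1
      apply h1.congr
      intro n
      simp [Finset.sum_range_succ]
    have hbdd : BddAbove (Set.range
        (fun n : ℕ => ‖a n * (Nat.factorial n : ℂ) / (ρ:ℂ) ^ (n+1)‖)) := by
      have := hterm.norm
      rw [norm_zero] at this
      exact this.bddAbove_range
    obtain ⟨C, hC⟩ := hbdd
    have hCn : ∀ n : ℕ, ‖a n * (Nat.factorial n : ℂ) / (ρ:ℂ) ^ (n+1)‖ ≤ C :=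
      fun n => hC (Set.mem_range_self n)
    refine ⟨C, le_trans (norm_nonneg _) (hCn 0), fun n => ?_⟩
    have h2 := hCn n
    rw [norm_div, norm_mul, norm_pow, Complex.norm_natCast, Complex.norm_real,
      Real.norm_eq_abs, abs_of_pos hρ0,
      div_le_iff₀ (by positivity)] at h2
    linarith [h2]
  -- Step 2: absolute convergence of the power series, everywhere.
  have habs : ∀ t : ℝ, Summable (fun n : ℕ => ‖a n‖ * |t| ^ n) := by
    obtain ⟨C, hC0, hC⟩ := keybound (r+1) (lt_add_one r)
    intro t
    refine Summable.of_nonneg_of_le (fun n => by positivity) (fun n => ?_)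
      (((Real.summable_pow_div_factorial ((r+1)*|t|)).mul_left (C * (r+1))))
    have hfac : (0:ℝ) < (Nat.factorial n : ℝ) := by positivity
    have h1 : ‖a n‖ ≤ C * (r+1)^(n+1) / (Nat.factorial n : ℝ) :=
      (le_div_iff₀ hfac).mpr (hC n)
    calc ‖a n‖ * |t| ^ n
        ≤ (C * (r+1)^(n+1) / (Nat.factorial n : ℝ)) * |t| ^ n :=
          mul_le_mul_of_nonneg_right h1 (by positivity)
      _ = C * (r+1) * (((r+1)*|t|)^n / (Nat.factorial n : ℝ)) := by
          rw [mul_pow, pow_succ]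
          ring
  have hsummable : ∀ t : ℝ, Summable (fun n : ℕ => a n * (t:ℂ)^n) := by
    intro t
    apply Summable.of_norm
    have := habs t
    apply this.congr
    intro n
    simp [map_mul, map_pow, Complex.norm_real]
  constructor
  · intro t
    apply (habs t).congr
    intro n
    simp [map_mul, map_pow, Complex.norm_real]
  -- Step 3: the Laplace transform.
  intro s hsr
  have hσ : 0 < s.re := hr.trans hsr
  set ρ : ℝ := (r + s.re)/2 with hρdef
  have hρr : r < ρ := by rw [hρdef]; linarith
  have hρσ : ρ < s.re := by rw [hρdef]; linarith
  have hρ0 : 0 < ρ := hr.trans hρr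
  clear_value ρ
  obtain ⟨C, hC0, hC⟩ := keybound ρ hρr
  set F : ℕ → ℝ → ℂ := fun n t => Complex.exp (-s * t) * (a n * (t:ℂ)^n) with hF
  clear_value F
  have hFeq : ∀ n : ℕ, F n
      = fun t : ℝ => a n * (Complex.exp (-s * t) * (t:ℂ)^n) := by
    intro n; funext t; rw [hF]; ring
  have hFint : ∀ n : ℕ, IntegrableOn (F n) (Set.Ioi 0) := by
    intro n
    rw [hFeq n]
    exact (laplace_integrable' hσ n).const_mul (a n)
  -- the integral of the norm of each term
  have hFnorm : ∀ n : ℕ, ∫ t in Set.Ioi (0:ℝ), ‖F n t‖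
      = ‖a n‖ * ((Nat.factorial n : ℝ) / s.re ^ (n+1)) := by
    intro n
    have hcong : ∀ t ∈ Set.Ioi (0:ℝ),
        ‖F n t‖ = ‖a n‖ * (t ^ ((n:ℝ)+1-1) * Real.exp (-(s.re * t))) := by
      intro t ht
      rw [hF, laplace_norm2, abs_of_pos ht,
        show ((n:ℝ)+1-1) = (n:ℝ) by ring, Real.rpow_natCast]
      ring
    rw [MeasureTheory.setIntegral_congr_fun measurableSet_Ioi hcong,
      MeasureTheory.integral_const_mul,
      Real.integral_rpow_mul_exp_neg_mul_Ioi (by positivity) hσ]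
    congr 1
    rw [Real.Gamma_nat_eq_factorial,
      show ((n:ℝ)+1) = ((n+1 : ℕ) : ℝ) by push_cast; ring, Real.rpow_natCast, one_div, inv_pow]
    field_simp
  -- summability of the integrals of norms
  have hFsum : Summable (fun n : ℕ => ∫ t in Set.Ioi (0:ℝ), ‖F n t‖) := by
    refine Summable.of_nonneg_of_le
      (fun n => MeasureTheory.integral_nonneg (fun t => norm_nonneg _)) (fun n => ?_)
      ((summable_geometric_of_lt_one (by positivity)
        ((div_lt_one hσ).mpr hρσ)).mul_left (C * (ρ / s.re)))
    rw [hFnorm n]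
    have h1 : ‖a n‖ * (Nat.factorial n : ℝ) ≤ C * ρ^(n+1) := hC n
    calc ‖a n‖ * ((Nat.factorial n : ℝ) / s.re ^ (n+1))
        = (‖a n‖ * (Nat.factorial n : ℝ)) / s.re ^ (n+1) := by ring
      _ ≤ C * ρ^(n+1) / s.re ^ (n+1) := by gcongr
      _ = C * (ρ / s.re) * (ρ / s.re) ^ n := by
          rw [div_pow, pow_succ]
          ring
  -- the main HasSum statement
  have hs1 : HasSum (fun n : ℕ => ∫ t in Set.Ioi (0:ℝ), F n t)
      (∫ t in Set.Ioi (0:ℝ), ∑' n : ℕ, F n t) :=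
    hasSum_integral_of_summable_integral_norm hFint hFsum
  have hFval : ∀ n : ℕ, ∫ t in Set.Ioi (0:ℝ), F n t
      = a n * (Nat.factorial n : ℂ) / s ^ (n+1) := by
    intro n
    rw [hFeq n, MeasureTheory.integral_const_mul, laplace_value' hσ n, mul_div_assoc]
  have hfun : (fun t : ℝ => Complex.exp (-s * t) * ∑' n : ℕ, a n * (t:ℂ)^n)
      = fun t : ℝ => ∑' n : ℕ, F n t := by
    funext t
    simp only [hF]
    exact (tsum_mul_left).symm
  constructor
  · -- integrability
    rw [hfun]
    have hg : IntegrableOn (fun t : ℝ => (C * ρ) * Real.exp (-(s.re - ρ) * t))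
        (Set.Ioi 0) :=
      (exp_neg_integrableOn_Ioi 0 (by linarith)).const_mul _
    apply Integrable.mono' hg
    · -- measurability
      apply StronglyMeasurable.aestronglyMeasurable
      apply stronglyMeasurable_of_tendsto (f := fun N : ℕ => fun t : ℝ =>
          ∑ n ∈ Finset.range N, F n t) Filter.atTop
      · intro N
        apply Continuous.stronglyMeasurable
        apply continuous_finset_sum
        intro n _
        simp only [hF]
        fun_prop
      · rw [tendsto_pi_nhds]
        intro t
        simp only [hF]
        exact (((hsummable t).mul_left (Complex.exp (-s * t))).hasSum.tendsto_sum_nat)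
    · -- the bound
      filter_upwards [MeasureTheory.ae_restrict_mem measurableSet_Ioi] with t ht
      have hsum1 : Summable (fun n : ℕ => ‖F n t‖) := by
        apply Summable.congr (((habs t).mul_left (Real.exp (-s.re * t))))
        intro n
        rw [hF]
        exact (laplace_norm2 s (a n) t n).symm
      have h2 : ‖∑' n : ℕ, F n t‖ ≤ ∑' n : ℕ, ‖F n t‖ := norm_tsum_le_tsum_norm hsum1
      refine h2.trans ?_
      have h3 : ∀ n : ℕ, ‖F n t‖ ≤ Real.exp (-s.re * t) *
          ((C * ρ) * ((ρ*t)^n / (Nat.factorial n : ℝ))) := by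
        intro n
        rw [hF, laplace_norm2]
        apply mul_le_mul_of_nonneg_left _ (Real.exp_nonneg _)
        have hfac : (0:ℝ) < (Nat.factorial n : ℝ) := by positivity
        have h1 : ‖a n‖ ≤ C * ρ^(n+1) / (Nat.factorial n : ℝ) :=
          (le_div_iff₀ hfac).mpr (hC n)
        calc ‖a n‖ * |t| ^ n
            ≤ (C * ρ^(n+1) / (Nat.factorial n : ℝ)) * |t| ^ n :=
              mul_le_mul_of_nonneg_right h1 (by positivity)
          _ = C * ρ * ((ρ*|t|)^n / (Nat.factorial n : ℝ)) := by
              rw [mul_pow, pow_succ]; ring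
          _ = C * ρ * ((ρ*t)^n / (Nat.factorial n : ℝ)) := by
              rw [abs_of_pos ht]
      have hsum2 : Summable (fun n : ℕ => Real.exp (-s.re * t) *
          ((C * ρ) * ((ρ*t)^n / (Nat.factorial n : ℝ)))) := by
        apply Summable.mul_left
        exact (Real.summable_pow_div_factorial (ρ*t)).mul_left _
      calc ∑' n : ℕ, ‖F n t‖
          ≤ ∑' n : ℕ, Real.exp (-s.re * t) *
            ((C * ρ) * ((ρ*t)^n / (Nat.factorial n : ℝ))) :=
            Summable.tsum_le_tsum h3 hsum1 hsum2
        _ = Real.exp (-s.re * t) * ((C * ρ) * Real.exp (ρ*t)) := by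
            rw [tsum_mul_left, tsum_mul_left, laplace_exp_tsum]
        _ = (C * ρ) * Real.exp (-(s.re - ρ) * t) := by
            rw [mul_left_comm, ← Real.exp_add]
            ring_nf
  · -- the limit statement
    rw [hfun]
    have := hs1
    rw [funext hFval] at this
    exact this.tendsto_sum_nat
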